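/- Fix a positive integer a. Suppose that for every coloring c : ℕ → Fin 2 there exists an infinite apart set H ⊆ ℕ such that FS^{{a, 2a}}(H) is monochromatic under c. Then for every coloring c : ℕ → Fin 2 there exists an infinite set H' ⊆ ℕ of positive integers such that FS^{≤2}(H') (all elements of H' and all sums of two distinct elements of H') is monochromatic under c. -/

import Mathlib

/-- `lam n` is the least exponent in the binary expansion of `n`
(the 2-adic valuation of `n`). -/
def lam (n : ℕ) : ℕ := padicValNat 2 n

/-- `mu n` is the greatest exponent in the binary expansion of `n`. -/
def mu (n : ℕ) : ℕ := Nat.log 2 n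

/-- A set `X` of positive integers is apart if for all `x < x'` in `X`,
`μ(x) < λ(x')`. -/
def ApartSet (X : Set ℕ) : Prop :=
  (∀ x ∈ X, 0 < x) ∧ ∀ x ∈ X, ∀ y ∈ X, x < y → mu x < lam y

/-- `FSeq j B` is the set of sums of `j` distinct elements of `B`. -/
def FSeq (j : ℕ) (B : Set ℕ) : Set ℕ :=
  {n | ∃ F : Finset ℕ, ↑F ⊆ B ∧ F.card = j ∧ ∑ x ∈ F, x = n}

/-- `FSin A B = ⋃ j ∈ A, FSeq j B`. -/
def FSin (A B : Set ℕ) : Set ℕ := ⋃ j ∈ A, FSeq j B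

/-- A set is monochromatic under a coloring `c` if `c` is constant on it. -/
def MonoChr {r : ℕ} (c : ℕ → Fin r) (S : Set ℕ) : Prop :=
  ∀ x ∈ S, ∀ y ∈ S, c x = c y

/-- The gaps of `n`: pairs of consecutive exponents in the binary expansion. -/
def gaps (n : ℕ) : Set (ℕ × ℕ) :=
  {p | n.testBit p.1 ∧ n.testBit p.2 ∧ p.1 < p.2 ∧
    ∀ t, p.1 < t → t < p.2 → ¬ n.testBit t}

/-- The gap `p` of `n` is short in `n` (w.r.t. `K` and approximation `Kapp`). -/
def ShortGap (K : Set ℕ) (Kapp : ℕ → Set ℕ) (n : ℕ) (p : ℕ × ℕ) : Prop :=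
  p ∈ gaps n ∧ ∃ x ≤ p.1, x ∈ K ∧ x ∉ Kapp p.2

/-- The gap `p` of `n` is very short in `n` (w.r.t. approximation `Kapp`). -/
def VeryShortGap (Kapp : ℕ → Set ℕ) (n : ℕ) (p : ℕ × ℕ) : Prop :=
  p ∈ gaps n ∧ ∃ x ≤ p.1, x ∈ Kapp (mu n) ∧ x ∉ Kapp p.2

/-- `SG K Kapp n` is the number of short gaps of `n`. -/
noncomputable def SG (K : Set ℕ) (Kapp : ℕ → Set ℕ) (n : ℕ) : ℕ :=
  {p : ℕ × ℕ | ShortGap K Kapp n p}.ncard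

/-- `VSG Kapp n` is the number of very short gaps of `n`. -/
noncomputable def VSG (Kapp : ℕ → Set ℕ) (n : ℕ) : ℕ :=
  {p : ℕ × ℕ | VeryShortGap Kapp n p}.ncard


lemma lam_le_mu {n : ℕ} (hn : 0 < n) : lam n ≤ mu n := by
  have hdvd : 2 ^ lam n ∣ n := pow_padicValNat_dvd
  have h1 : 2 ^ lam n ≤ n := Nat.le_of_dvd hn hdvd
  exact (Nat.le_log_iff_pow_le (by norm_num) hn.ne').mpr h1

lemma apart_sum_lt {H : Set ℕ} (hH : ApartSet H) :
    ∀ F : Finset ℕ, ↑F ⊆ H → ∀ L, (∀ x ∈ F, mu x < L) → ∑ x ∈ F, x < 2 ^ L := by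
  intro F
  induction F using Finset.induction_on_max with
  | empty => intro _ L _; simpa using Nat.pos_pow_of_pos L (by norm_num)
  | insert b s hmax ih =>
    intro hsub L hL
    have hbH : b ∈ H := hsub (by simp)
    have hsH : (↑s : Set ℕ) ⊆ H := fun x hx => hsub (by simpa using Or.inr hx)
    have hb0 : 0 < b := hH.1 b hbH
    have hsum : ∑ x ∈ s, x < 2 ^ lam b := by
      refine ih hsH _ (fun x hx => ?_)
      exact hH.2 x (hsH hx) b hbH (hmax x hx)
    have hmuL : mu b < L := hL b (Finset.mem_insert_self _ _)
    have h1 : b < 2 ^ (mu b + 1) := Nat.lt_pow_succ_log_self (by norm_num) b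
    have h2 : (2 : ℕ) ^ (mu b + 1) ≤ 2 ^ L := Nat.pow_le_pow_right (by norm_num) hmuL
    have hbL : b < 2 ^ L := lt_of_lt_of_le h1 h2
    have hdvd : 2 ^ lam b ∣ b := pow_padicValNat_dvd
    have hdvd2 : (2 : ℕ) ^ lam b ∣ 2 ^ L :=
      pow_dvd_pow 2 (le_trans (lam_le_mu hb0) (le_of_lt hmuL))
    obtain ⟨k, hk⟩ := hdvd
    obtain ⟨m, hm⟩ := hdvd2
    have hkm : k < m := by
      have : 2 ^ lam b * k < 2 ^ lam b * m := by rw [← hk, ← hm]; exact hbL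
      exact Nat.lt_of_mul_lt_mul_left this
    have hkey : b + 2 ^ lam b ≤ 2 ^ L := by
      have : 2 ^ lam b * (k + 1) ≤ 2 ^ lam b * m :=
        Nat.mul_le_mul_left _ hkm
      have e1 : b + 2 ^ lam b = 2 ^ lam b * (k + 1) := by rw [Nat.mul_succ, ← hk]
      rw [e1, hm]; exact this
    have hbs : b ∉ s := fun hb => lt_irrefl b (hmax b hb)
    rw [Finset.sum_insert hbs]
    omega

theorem ht_a_2a_implies_ht_le_two (a : ℕ) (ha : 0 < a)
    (hyp : ∀ c : ℕ → Fin 2, ∃ H : Set ℕ, H.Infinite ∧ ApartSet H ∧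
      MonoChr c (FSin {a, 2 * a} H)) :
    ∀ c : ℕ → Fin 2, ∃ H : Set ℕ, H.Infinite ∧ (∀ x ∈ H, 0 < x) ∧
      MonoChr c (FSin {1, 2} H) := by
  intro c
  obtain ⟨H, hHinf, hHap, hHmono⟩ := hyp c
  set h : ℕ → ℕ := Nat.nth (· ∈ H) with hh
  have hmem : ∀ n, h n ∈ H := fun n => Nat.nth_mem_of_infinite hHinf n
  have hmono : StrictMono h := Nat.nth_strictMono hHinf
  set block : ℕ → Finset ℕ := fun i => (Finset.Ico (a * i) (a * i + a)).image h with hblock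
  have hblock_sub : ∀ i, (↑(block i) : Set ℕ) ⊆ H := by
    intro i x hx
    simp only [hblock, Finset.coe_image, Set.mem_image] at hx
    obtain ⟨m, _, rfl⟩ := hx
    exact hmem m
  have hblock_card : ∀ i, (block i).card = a := by
    intro i
    rw [hblock]
    rw [Finset.card_image_of_injective _ hmono.injective, Nat.card_Ico]
    omega
  set s : ℕ → ℕ := fun i => ∑ x ∈ block i, x with hs
  have hblock_lt : ∀ i, ∀ x ∈ block i, ∀ j, i < j → ∀ y ∈ block j, x < y := by
    intro i x hx j hij y hy
    simp only [hblock, Finset.mem_image, Finset.mem_Ico] at hx hy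
    obtain ⟨m, hm, rfl⟩ := hx
    obtain ⟨n, hn, rfl⟩ := hy
    exact hmono (by nlinarith [hm.2, hn.1])
  have hpos : ∀ i, 0 < s i := by
    intro i
    have hx : h (a * i) ∈ block i := by
      simp only [hblock, Finset.mem_image, Finset.mem_Ico]
      exact ⟨a * i, ⟨le_refl _, by omega⟩, rfl⟩
    have := hHap.1 _ (hmem (a * i))
    calc 0 < h (a * i) := this
      _ ≤ s i := Finset.single_le_sum (fun x _ => Nat.zero_le x) hx
  have hsmono : StrictMono s := by
    apply strictMono_nat_of_lt_succ
    intro i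
    have hy : h (a * (i + 1)) ∈ block (i + 1) := by
      simp only [hblock, Finset.mem_image, Finset.mem_Ico]
      exact ⟨a * (i + 1), ⟨le_refl _, by omega⟩, rfl⟩
    have hyH : h (a * (i + 1)) ∈ H := hmem _
    have hy0 : 0 < h (a * (i + 1)) := hHap.1 _ hyH
    have h1 : s i < 2 ^ lam (h (a * (i + 1))) := by
      apply apart_sum_lt hHap _ (hblock_sub i)
      intro x hx
      exact hHap.2 x (hblock_sub i hx) _ hyH
        (hblock_lt i x hx (i + 1) (by omega) _ hy)
    have h2 : 2 ^ lam (h (a * (i + 1))) ≤ h (a * (i + 1)) :=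
      Nat.le_of_dvd hy0 pow_padicValNat_dvd
    have h3 : h (a * (i + 1)) ≤ s (i + 1) :=
      Finset.single_le_sum (fun x _ => Nat.zero_le x) hy
    omega
  have hblock_disj : ∀ i j, i ≠ j → Disjoint (block i) (block j) := by
    intro i j hij
    rw [Finset.disjoint_left]
    intro x hxi hxj
    rcases lt_or_gt_of_ne hij with hlt | hlt
    · exact lt_irrefl x (hblock_lt i x hxi j hlt x hxj)
    · exact lt_irrefl x (hblock_lt j x hxj i hlt x hxi)
  refine ⟨Set.range s, Set.infinite_range_of_injective hsmono.injective, ?_, ?_⟩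
  · rintro x ⟨i, rfl⟩; exact hpos i
  · -- monochromaticity: FSin {1,2} (range s) ⊆ FSin {a, 2a} H
    have hsub : FSin {1, 2} (Set.range s) ⊆ FSin {a, 2 * a} H := by
      intro x hx
      simp only [FSin, Set.mem_iUnion, Set.mem_insert_iff, Set.mem_singleton_iff] at hx ⊢
      obtain ⟨j, hj, hxj⟩ := hx
      obtain ⟨F, hF, hFcard, hFsum⟩ := hxj
      rcases hj with rfl | rfl
      · obtain ⟨b, rfl⟩ := Finset.card_eq_one.mp hFcard
        have hb : b ∈ Set.range s := hF (Finset.mem_coe.mpr (Finset.mem_singleton_self b))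
        obtain ⟨i, rfl⟩ := hb
        refine ⟨a, Or.inl rfl, block i, hblock_sub i, hblock_card i, ?_⟩
        simpa using hFsum
      · obtain ⟨b₁, b₂, hne, rfl⟩ := Finset.card_eq_two.mp hFcard
        have hb1 : b₁ ∈ Set.range s := hF (Finset.mem_coe.mpr (Finset.mem_insert_self _ _))
        have hb2 : b₂ ∈ Set.range s :=
          hF (Finset.mem_coe.mpr (Finset.mem_insert_of_mem (Finset.mem_singleton_self _)))
        obtain ⟨i, rfl⟩ := hb1
        obtain ⟨j, rfl⟩ := hb2
        have hij : i ≠ j := fun h => hne (by rw [h])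
        refine ⟨2 * a, Or.inr rfl, block i ∪ block j, ?_, ?_, ?_⟩
        · intro x hx
          rcases Finset.mem_union.mp hx with h' | h'
          · exact hblock_sub i h'
          · exact hblock_sub j h'
        · rw [Finset.card_union_of_disjoint (hblock_disj i j hij),
            hblock_card, hblock_card]; ring
        · rw [Finset.sum_union (hblock_disj i j hij)]
          rw [← hFsum, Finset.sum_pair hne]
    intro x hx y hy
    exact hHmono x (hsub hx) y (hsub hy)
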